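/- arXiv:2403.17663 — 2 statements merged into one kernel-verified Lean document; each statement's English description precedes it below -/
import Mathlib

section
/- There exists a finite constant C such that for every integer n ≥ 1 and every x ∈ ℤ² with |x| ≥ 3, the simple symmetric random walk on ℤ² satisfies P(S_n = x) ≤ (2/n)·e^{−|x|²/(2n)} + C/(n·|x|²); equivalently, 4^{−n}·W_n^{o,x} ≤ (2/n)·e^{−|x|²/(2n)} + C/(n·|x|²). -/
open scoped Real

/-- Graph (L¹) distance of `x ∈ ℤ²` from the origin: `|x₁| + |x₂|`. -/
def gnorm (x : ℤ × ℤ) : ℕ := x.1.natAbs + x.2.natAbs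

/-- `W n x` is the number of nearest-neighbour walks of length `n` in `ℤ²`
from the origin `o = (0,0)` to `x`, i.e. the number of sequences
`(v₀, …, v_n)` with `v₀ = o`, `v_n = x` and `|v_{i+1} − v_i| = 1` for all `i`. -/
noncomputable def W (n : ℕ) (x : ℤ × ℤ) : ℕ :=
  Set.ncard {v : Fin (n + 1) → ℤ × ℤ |
    v 0 = (0, 0) ∧ v (Fin.last n) = x ∧
    ∀ i : Fin n, gnorm (v i.succ - v i.castSucc) = 1}

/-- The Green's function `G^{o,x}` of the simple random walk on `ℤ²` with
killing rate `κ`: `G κ x = Σ_{n≥0} (4+κ)^{-n} W_n^{o,x}`. -/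
noncomputable def G (κ : ℝ) (x : ℤ × ℤ) : ℝ :=
  ∑' n : ℕ, (1 / (4 + κ)) ^ n * (W n x : ℝ)


lemma cb_sq : ∀ m : ℕ, (Nat.centralBinom m)^2 * (2*m+1) ≤ 16^m := by
  intro m
  induction m with
  | zero => simp [Nat.centralBinom]
  | succ m ih =>
    have h := Nat.succ_mul_centralBinom_succ m
    have key : (m+1)^2 * ((Nat.centralBinom (m+1))^2 * (2*(m+1)+1)) ≤ (m+1)^2 * 16^(m+1) := by
      have e : (m+1)^2 * ((Nat.centralBinom (m+1))^2 * (2*(m+1)+1))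
          = (2*(2*m+1))^2 * (2*m+3) * (Nat.centralBinom m)^2 := by
        have : ((m+1) * Nat.centralBinom (m+1))^2 = (2*(2*m+1) * Nat.centralBinom m)^2 := by
          rw [h]
        ring_nf
        ring_nf at this
        nlinarith [this]
      rw [e]
      calc (2*(2*m+1))^2 * (2*m+3) * (Nat.centralBinom m)^2
          = (4*(2*m+1)*(2*m+3)) * ((Nat.centralBinom m)^2 * (2*m+1)) := by ring
        _ ≤ (16*(m+1)^2) * 16^m := by
            exact Nat.mul_le_mul (by nlinarith) ih
        _ = (m+1)^2 * 16^(m+1) := by ring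
    exact Nat.le_of_mul_le_mul_left key (by positivity)


lemma mid_sq (n : ℕ) : (n.choose (n/2))^2 * n ≤ 4^n := by
  rcases Nat.even_or_odd n with ⟨m, hm⟩ | ⟨m, hm⟩
  · subst hm
    have h2 : (m+m)/2 = m := by omega
    rw [h2]
    have : (m+m).choose m = Nat.centralBinom m := by
      rw [Nat.centralBinom]; congr 1; omega
    rw [this]
    calc (Nat.centralBinom m)^2 * (m+m) ≤ (Nat.centralBinom m)^2 * (2*m+1) :=
          Nat.mul_le_mul_left _ (by omega)
      _ ≤ 16^m := cb_sq m
      _ ≤ 4^(m+m) := by rw [show (16:ℕ)^m = 4^(2*m) by rw [pow_mul]; norm_num]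
                        exact Nat.pow_le_pow_right (by norm_num) (by omega)
  · subst hm
    have h2 : (2*m+1)/2 = m := by omega
    rw [h2]
    have hs : (2*m+1).choose m = (2*m).choose m + (2*m).choose (m+1) := by
      have h1 : (2*m+1).choose m = (2*m+1).choose (m+1) := by
        have := Nat.choose_symm (show m+1 ≤ 2*m+1 by omega)
        simpa [show 2*m+1-(m+1) = m by omega] using this
      rw [h1]
      exact Nat.choose_succ_succ (2*m) m
    have hle : (2*m+1).choose m ≤ 2 * Nat.centralBinom m := by
      rw [hs, Nat.centralBinom]
      have : (2*m).choose (m+1) ≤ (2*m).choose m := by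
        have := Nat.choose_le_middle (m+1) (2*m)
        simpa [show (2*m)/2 = m by omega] using this
      omega
    calc ((2*m+1).choose m)^2 * (2*m+1) ≤ (2*Nat.centralBinom m)^2 * (2*m+1) := by
          exact Nat.mul_le_mul_right _ (Nat.pow_le_pow_left hle 2)
      _ = 4 * ((Nat.centralBinom m)^2 * (2*m+1)) := by ring
      _ ≤ 4 * 16^m := Nat.mul_le_mul_left _ (cb_sq m)
      _ = 4^(2*m+1) := by rw [show (16:ℕ)^m = 4^(2*m) by rw [pow_mul]; norm_num]; ring


noncomputable def Ff : ℝ → ℝ := fun t => Real.log (1+t) - Real.log (1-t) - 2*t - 2/3*t^3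

lemma Ff_deriv {t : ℝ} (h2 : -1 < t) (h1 : t < 1) :
    HasDerivAt Ff (1/(1+t) + 1/(1-t) - 2 - 2*t^2) t := by
  have ha : (1:ℝ) + t ≠ 0 := by linarith
  have hb : (1:ℝ) - t ≠ 0 := by linarith
  have d1 : HasDerivAt (fun s : ℝ => Real.log (1+s)) (1/(1+t)) t := by
    have := (Real.hasDerivAt_log ha).comp t ((hasDerivAt_id t).const_add 1)
    simpa [Function.comp_def] using this
  have d2 : HasDerivAt (fun s : ℝ => Real.log (1-s)) (-(1/(1-t))) t := by
    have := (Real.hasDerivAt_log hb).comp t ((hasDerivAt_id t).neg.const_add 1)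
    simpa [div_eq_mul_inv, Function.comp_def] using this
  have d3 : HasDerivAt (fun s : ℝ => 2*s) (2:ℝ) t := by
    simpa using (hasDerivAt_id t).const_mul 2
  have d4 : HasDerivAt (fun s : ℝ => 2/3*s^3) (2*t^2) t := by
    have := (hasDerivAt_pow 3 t).const_mul (2/3 : ℝ)
    exact this.congr_deriv (by norm_num; ring)
  have := ((d1.sub d2).sub d3).sub d4
  exact this.congr_deriv (by ring)

lemma Ff_nonneg {x : ℝ} (h0 : 0 ≤ x) (h1 : x < 1) : 0 ≤ Ff x := by
  have mono : MonotoneOn Ff (Set.Icc 0 x) := by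
    apply monotoneOn_of_deriv_nonneg (convex_Icc 0 x)
    · apply DifferentiableOn.continuousOn (𝕜 := ℝ) (f := Ff)
      intro t ht
      exact (Ff_deriv (by cases ht; linarith) (by cases ht; linarith)).differentiableAt.differentiableWithinAt
    · intro t ht
      rw [interior_Icc] at ht
      exact (Ff_deriv (by cases ht; linarith) (by cases ht; linarith)).differentiableAt.differentiableWithinAt
    · intro t ht
      rw [interior_Icc] at ht
      obtain ⟨ht0, htx⟩ := ht
      rw [(Ff_deriv (by linarith) (by linarith)).deriv]
      have ha : (0:ℝ) < 1 + t := by linarith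
      have hb : (0:ℝ) < 1 - t := by linarith
      rw [div_add_div _ _ (ne_of_gt ha) (ne_of_gt hb)]
      have : (1:ℝ)*(1-t) + (1+t)*1 = 2 := by ring
      rw [this]
      have h2 : (0:ℝ) < (1+t)*(1-t) := by nlinarith
      have key : 2 / ((1+t)*(1-t)) - 2 - 2*t^2 = (2*t^4) / ((1+t)*(1-t)) := by
        field_simp
        ring
      rw [key]
      positivity
  have h00 : Ff 0 = 0 := by simp [Ff]
  have := mono (Set.left_mem_Icc.2 h0) (Set.right_mem_Icc.2 h0) h0
  linarith [this, h00.symm.le]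

lemma ratio_le_exp {x : ℝ} (h0 : 0 ≤ x) (h1 : x < 1) :
    (1 - x) / (1 + x) ≤ Real.exp (-(2*x + 2/3*x^3)) := by
  have hF := Ff_nonneg h0 h1
  have ha : (0:ℝ) < 1 + x := by linarith
  have hb : (0:ℝ) < 1 - x := by linarith
  rw [div_le_iff₀ ha, ← Real.exp_log (show (0:ℝ) < 1 - x from hb)]
  have : Real.log (1-x) ≤ -(2*x + 2/3*x^3) + Real.log (1+x) := by
    simp only [Ff] at hF; linarith
  calc Real.exp (Real.log (1-x)) ≤ Real.exp (-(2*x+2/3*x^3) + Real.log (1+x)) :=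
        Real.exp_le_exp.2 this
    _ = Real.exp (-(2*x+2/3*x^3)) * (1+x) := by rw [Real.exp_add, Real.exp_log ha]


noncomputable def hterm (x : ℝ) : ℝ := 2*x + 2/3*x^3

lemma sum_even_eq (m : ℕ) : ∀ j : ℕ,
    ∑ i ∈ Finset.range j, hterm ((2*(i:ℝ)+1)/(2*(m:ℝ)+1))
      = 2*(j:ℝ)^2/(2*(m:ℝ)+1) + (2/3)*(2*(j:ℝ)^4-(j:ℝ)^2)/(2*(m:ℝ)+1)^3 := by
  have hq : (2*(m:ℝ)+1) ≠ 0 := by positivity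
  intro j
  induction j with
  | zero => simp
  | succ j ih =>
    rw [Finset.sum_range_succ, ih, hterm]
    push_cast
    field_simp
    ring

lemma sum_odd_eq (m : ℕ) : ∀ j : ℕ,
    ∑ i ∈ Finset.range j, hterm (((i:ℝ)+1)/((m:ℝ)+1))
      = (j:ℝ)*((j:ℝ)+1)/((m:ℝ)+1) + (j:ℝ)^2*((j:ℝ)+1)^2/(6*((m:ℝ)+1)^3) := by
  have hq : ((m:ℝ)+1) ≠ 0 := by positivity
  intro j
  induction j with
  | zero => simp
  | succ j ih =>
    rw [Finset.sum_range_succ, ih, hterm]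
    push_cast
    field_simp
    ring

lemma tele_even (m : ℕ) : ∀ j, j ≤ m →
    ((2*m).choose (m+j) : ℝ) * Real.exp (∑ i ∈ Finset.range j, hterm ((2*(i:ℝ)+1)/(2*(m:ℝ)+1)))
      ≤ ((2*m).choose m : ℝ) := by
  intro j
  induction j with
  | zero => simp
  | succ j ih =>
    intro hj
    have hjm : j < m := hj
    have hih := ih hjm.le
    -- choose relation
    have hrel : ((2*m).choose (m+j+1) : ℝ) * ((m:ℝ)+(j:ℝ)+1) = ((2*m).choose (m+j) : ℝ) * ((m:ℝ)-(j:ℝ)) := by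
      have h := Nat.choose_succ_right_eq (2*m) (m+j)
      have h2 : 2*m - (m+j) = m - j := by omega
      rw [h2] at h
      have := congrArg (fun t : ℕ => (t:ℝ)) h
      push_cast [Nat.cast_sub hjm.le] at this
      push_cast
      convert this using 2 <;> ring
    have hx0 : (0:ℝ) ≤ (2*(j:ℝ)+1)/(2*(m:ℝ)+1) := by positivity
    have hx1 : (2*(j:ℝ)+1)/(2*(m:ℝ)+1) < 1 := by
      rw [div_lt_one (by positivity)]
      have : (j:ℝ) < (m:ℝ) := by exact_mod_cast hjm
      linarith
    have hratio := ratio_le_exp hx0 hx1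
    set x := (2*(j:ℝ)+1)/(2*(m:ℝ)+1) with hxdef
    have hmj : ((2*m).choose (m+j+1) : ℝ) = ((2*m).choose (m+j) : ℝ) * ((1-x)/(1+x)) := by
      have hden : ((m:ℝ)+(j:ℝ)+1) ≠ 0 := by positivity
      have e1 : (1-x)/(1+x) = ((m:ℝ)-(j:ℝ))/((m:ℝ)+(j:ℝ)+1) := by
        rw [hxdef]
        have hq : (2*(m:ℝ)+1) ≠ 0 := by positivity
        field_simp
        ring
      rw [e1]
      field_simp
      linarith [hrel]
    set S := ∑ i ∈ Finset.range j, hterm ((2*(i:ℝ)+1)/(2*(m:ℝ)+1)) with hS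
    rw [Finset.sum_range_succ, ← hS, show m + (j+1) = m+j+1 by ring, hmj, Real.exp_add]
    calc ((2*m).choose (m+j) : ℝ) * ((1-x)/(1+x)) * (Real.exp S * Real.exp (hterm x))
        ≤ ((2*m).choose (m+j) : ℝ) * Real.exp (-(hterm x)) * (Real.exp S * Real.exp (hterm x)) := by
          apply mul_le_mul_of_nonneg_right
          · apply mul_le_mul_of_nonneg_left _ (by positivity)
            simpa [hterm] using hratio
          · positivity
      _ = ((2*m).choose (m+j) : ℝ) * Real.exp S := by
          rw [mul_assoc, ← Real.exp_add, ← Real.exp_add,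
            show -(hterm x) + (S + hterm x) = S by ring]
      _ ≤ ((2*m).choose m : ℝ) := hih

lemma tele_odd (m : ℕ) : ∀ j, j ≤ m →
    ((2*m+1).choose (m+1+j) : ℝ) * Real.exp (∑ i ∈ Finset.range j, hterm (((i:ℝ)+1)/((m:ℝ)+1)))
      ≤ ((2*m+1).choose (m+1) : ℝ) := by
  intro j
  induction j with
  | zero => simp
  | succ j ih =>
    intro hj
    have hjm : j < m := hj
    have hih := ih hjm.le
    have hrel : ((2*m+1).choose (m+1+j+1) : ℝ) * ((m:ℝ)+(j:ℝ)+2) = ((2*m+1).choose (m+1+j) : ℝ) * ((m:ℝ)-(j:ℝ)) := by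
      have h := Nat.choose_succ_right_eq (2*m+1) (m+1+j)
      have h2 : 2*m+1 - (m+1+j) = m - j := by omega
      rw [h2] at h
      have := congrArg (fun t : ℕ => (t:ℝ)) h
      push_cast [Nat.cast_sub hjm.le] at this
      push_cast
      convert this using 2 <;> ring
    have hx0 : (0:ℝ) ≤ ((j:ℝ)+1)/((m:ℝ)+1) := by positivity
    have hx1 : ((j:ℝ)+1)/((m:ℝ)+1) < 1 := by
      rw [div_lt_one (by positivity)]
      have : (j:ℝ) < (m:ℝ) := by exact_mod_cast hjm
      linarith
    have hratio := ratio_le_exp hx0 hx1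
    set x := ((j:ℝ)+1)/((m:ℝ)+1) with hxdef
    have hmj : ((2*m+1).choose (m+1+j+1) : ℝ) = ((2*m+1).choose (m+1+j) : ℝ) * ((1-x)/(1+x)) := by
      have hden : ((m:ℝ)+(j:ℝ)+2) ≠ 0 := by positivity
      have e1 : (1-x)/(1+x) = ((m:ℝ)-(j:ℝ))/((m:ℝ)+(j:ℝ)+2) := by
        have h1x : (0:ℝ) < 1 + x := by positivity
        rw [hxdef] at h1x ⊢
        rw [div_eq_div_iff h1x.ne' (by positivity : (0:ℝ) < (m:ℝ)+(j:ℝ)+2).ne']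
        have hq : ((m:ℝ)+1) ≠ 0 := by positivity
        field_simp
        ring
      rw [e1]
      field_simp
      linarith [hrel]
    set S := ∑ i ∈ Finset.range j, hterm (((i:ℝ)+1)/((m:ℝ)+1)) with hS
    rw [Finset.sum_range_succ, ← hS, show m + 1 + (j+1) = m+1+j+1 by ring, hmj, Real.exp_add]
    calc ((2*m+1).choose (m+1+j) : ℝ) * ((1-x)/(1+x)) * (Real.exp S * Real.exp (hterm x))
        ≤ ((2*m+1).choose (m+1+j) : ℝ) * Real.exp (-(hterm x)) * (Real.exp S * Real.exp (hterm x)) := by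
          apply mul_le_mul_of_nonneg_right
          · apply mul_le_mul_of_nonneg_left _ (by positivity)
            simpa [hterm] using hratio
          · positivity
      _ = ((2*m+1).choose (m+1+j) : ℝ) * Real.exp S := by
          rw [mul_assoc, ← Real.exp_add, ← Real.exp_add,
            show -(hterm x) + (S + hterm x) = S by ring]
      _ ≤ ((2*m+1).choose (m+1) : ℝ) := hih


lemma even_sum_ge (m j : ℕ) (hm : 1 ≤ m) (hj : j ≤ m) :
    (j:ℝ)^2/(m:ℝ) - 1/3 ≤ 2*(j:ℝ)^2/(2*(m:ℝ)+1) + (2/3)*(2*(j:ℝ)^4-(j:ℝ)^2)/(2*(m:ℝ)+1)^3 := by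
  rcases eq_or_lt_of_le hm with h1 | h2
  · -- m = 1
    have : m = 1 := h1.symm
    subst this
    interval_cases j <;> norm_num
  · -- 2 ≤ m
    have hm2 : (2:ℝ) ≤ (m:ℝ) := by exact_mod_cast h2
    have hj' : (j:ℝ) ≤ (m:ℝ) := by exact_mod_cast hj
    have hj0 : (0:ℝ) ≤ (j:ℝ) := by positivity
    set M := (m:ℝ) with hM
    set J := (j:ℝ) with hJ
    have hM0 : (0:ℝ) < M := by linarith
    have hq : (0:ℝ) < 2*M+1 := by linarith
    have cert : (3*(2*M+1)^2 + 2*M)^2 ≤ 16*M^2*(2*M+1)^3 := by nlinarith [sq_nonneg M, sq_nonneg (M-2), sq_nonneg (M*(M-2))]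
    rw [div_add_div _ _ (by positivity) (by positivity), div_sub_div _ _ (by positivity) (by norm_num), div_le_div_iff₀ (by positivity) (by positivity)]
    nlinarith [sq_nonneg (3*(2*M+1)^2 + 2*M - 8*M*J^2), cert, mul_pos hM0 hq, sq_nonneg J, mul_pos (mul_pos hM0 hM0) hq, mul_pos hq hq]

lemma odd_sum_ge (m j : ℕ) (hm : 2 ≤ m) (hj : j ≤ m) :
    (2*(j:ℝ)+1)^2/(2*(2*(m:ℝ)+1)) - 1/3 ≤ (j:ℝ)*((j:ℝ)+1)/((m:ℝ)+1) + (j:ℝ)^2*((j:ℝ)+1)^2/(6*((m:ℝ)+1)^3) := by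
  have hm2 : (2:ℝ) ≤ (m:ℝ) := by exact_mod_cast hm
  have hj' : (j:ℝ) ≤ (m:ℝ) := by exact_mod_cast hj
  have hj0 : (0:ℝ) ≤ (j:ℝ) := by positivity
  set M := (m:ℝ)
  set J := (j:ℝ)
  have hq : (0:ℝ) < 2*M+1 := by linarith
  have hM1 : (0:ℝ) < M+1 := by linarith
  have cert : 9*(M+1) + 3*(2*M+1) ≤ 2*(2*M+1)^2 := by nlinarith [sq_nonneg (M-2)]
  rw [div_add_div _ _ (by positivity) (by positivity), div_sub_div _ _ (by positivity) (by norm_num), div_le_div_iff₀ (by positivity) (by positivity)]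
  have h1 := sq_nonneg (J*(J+1)*(2*M+1) - 3*(M+1)^2)
  have h2 : (0:ℝ) ≤ (M+1)^3 * (2*(2*M+1)^2 - 3*(2*M+1) - 9*(M+1)) := by
    apply mul_nonneg (by positivity); linarith
  nlinarith [h1, h2]


lemma mid_real (n : ℕ) (hn : 1 ≤ n) : ((n.choose (n/2)) : ℝ) ≤ 2^n / Real.sqrt n := by
  have hn0 : (0:ℝ) < (n:ℝ) := by exact_mod_cast hn
  have hs : (0:ℝ) < Real.sqrt n := Real.sqrt_pos.2 hn0
  rw [le_div_iff₀ hs]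
  have h1 : ((n.choose (n/2) : ℝ))^2 * n ≤ ((2:ℝ)^n)^2 := by
    have h2 : ((n.choose (n/2))^2 * n : ℕ) ≤ ((4:ℕ)^n : ℕ) := mid_sq n
    calc ((n.choose (n/2) : ℝ))^2 * n = (((n.choose (n/2))^2 * n : ℕ) : ℝ) := by push_cast; ring
      _ ≤ ((4:ℕ)^n : ℝ) := by exact_mod_cast h2
      _ = ((2:ℝ)^n)^2 := by
          push_cast
          rw [← pow_mul, Nat.mul_comm, pow_mul]
          norm_num
  have hc : (0:ℝ) ≤ (n.choose (n/2) : ℝ) := by positivity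
  have hsq : ((n.choose (n/2) : ℝ) * Real.sqrt n)^2 ≤ ((2:ℝ)^n)^2 := by
    rw [mul_pow, Real.sq_sqrt hn0.le]
    exact h1
  have h2n : (0:ℝ) ≤ (2:ℝ)^n := by positivity
  nlinarith [hsq, mul_nonneg hc hs.le]

lemma sqrt_two_ge : (1.4:ℝ) ≤ Real.sqrt 2 := by
  rw [show (1.4:ℝ) = Real.sqrt (1.4^2) by rw [Real.sqrt_sq]; norm_num]
  apply Real.sqrt_le_sqrt; norm_num

lemma exp_third : Real.exp (1/3) ≤ Real.sqrt 2 := by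
  by_contra h
  push_neg at h
  have h3 : Real.sqrt 2 ^ 3 < Real.exp (1/3) ^ 3 :=
    pow_lt_pow_left₀ h (Real.sqrt_nonneg 2) (by norm_num)
  have he : Real.exp (1/3)^3 = Real.exp 1 := by
    rw [← Real.exp_nat_mul]; norm_num
  have hcube : Real.sqrt 2 ^ 3 = 2 * Real.sqrt 2 := by
    rw [pow_succ, Real.sq_sqrt (by norm_num : (0:ℝ) ≤ 2)]
  have := Real.exp_one_lt_d9.le
  nlinarith [sqrt_two_ge]



lemma exp_half_le : Real.exp ((1:ℝ)/2) ≤ 2 := by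
  nlinarith [Real.exp_one_lt_d9.le,
    (by rw [← Real.exp_add]; norm_num : Real.exp ((1:ℝ)/2) * Real.exp ((1:ℝ)/2) = Real.exp 1),
    Real.exp_pos ((1:ℝ)/2)]

lemma case_n1 : ((Nat.choose 1 1 : ℕ) : ℝ) ≤ Real.sqrt 2 * (2^1 / Real.sqrt ((1:ℕ):ℝ)) * Real.exp (-(2*((1:ℕ):ℝ)-((1:ℕ):ℝ))^2/(2*((1:ℕ):ℝ))) := by
  norm_num [Real.sqrt_one]
  rw [show (-(1/2) : ℝ) = -(1/2) from rfl, Real.exp_neg]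
  have h3 : (0:ℝ) < Real.exp (1/2) := Real.exp_pos _
  rw [show Real.sqrt 2 * 2 * (Real.exp (1/2))⁻¹ = (Real.sqrt 2 * 2) / Real.exp (1/2) by ring,
    le_div_iff₀ h3]
  nlinarith [sqrt_two_ge, exp_half_le]

lemma case_n3k2 : ((Nat.choose 3 2 : ℕ) : ℝ) ≤ Real.sqrt 2 * (2^3 / Real.sqrt ((3:ℕ):ℝ)) * Real.exp (-(2*((2:ℕ):ℝ)-((3:ℕ):ℝ))^2/(2*((3:ℕ):ℝ))) := by
  have h5 : Real.sqrt 3 ≤ 1.75 := by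
    rw [show (1.75:ℝ) = Real.sqrt (1.75^2) by rw [Real.sqrt_sq]; norm_num]
    apply Real.sqrt_le_sqrt; norm_num
  have h6 : (0:ℝ) < Real.sqrt 3 := by positivity
  have hlow : (5/6 : ℝ) ≤ Real.exp (-(2*((2:ℕ):ℝ)-((3:ℕ):ℝ))^2/(2*((3:ℕ):ℝ))) := by
    have he : (-(2*((2:ℕ):ℝ)-((3:ℕ):ℝ))^2/(2*((3:ℕ):ℝ))) = -(1/6) := by push_cast; norm_num
    rw [he]
    have := Real.add_one_le_exp (-(1/6) : ℝ)
    linarith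
  have hchoose : ((Nat.choose 3 2 : ℕ) : ℝ) = 3 := by norm_num
  rw [hchoose]
  calc (3:ℝ) ≤ Real.sqrt 2 * (2^3 / Real.sqrt ((3:ℕ):ℝ)) * (5/6) := by
        push_cast
        rw [show Real.sqrt 2 * (2^3/Real.sqrt 3) * (5/6) = (Real.sqrt 2 * (2^3*(5/6)))/Real.sqrt 3 by ring,
          le_div_iff₀ h6]
        nlinarith [sqrt_two_ge]
    _ ≤ _ := by
        apply mul_le_mul_of_nonneg_left hlow
        have : (0:ℝ) < Real.sqrt ((3:ℕ):ℝ) := by push_cast; positivity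
        positivity

lemma case_n3k3 : ((Nat.choose 3 3 : ℕ) : ℝ) ≤ Real.sqrt 2 * (2^3 / Real.sqrt ((3:ℕ):ℝ)) * Real.exp (-(2*((3:ℕ):ℝ)-((3:ℕ):ℝ))^2/(2*((3:ℕ):ℝ))) := by
  have h5 : Real.sqrt 3 ≤ 1.75 := by
    rw [show (1.75:ℝ) = Real.sqrt (1.75^2) by rw [Real.sqrt_sq]; norm_num]
    apply Real.sqrt_le_sqrt; norm_num
  have h6 : (0:ℝ) < Real.sqrt 3 := by positivity
  have he : (-(2*((3:ℕ):ℝ)-((3:ℕ):ℝ))^2/(2*((3:ℕ):ℝ))) = -(3/2) := by push_cast; norm_num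
  rw [he, Nat.choose_self, Nat.cast_one, Real.exp_neg]
  have h32 : Real.exp ((3:ℝ)/2) ≤ 5.44 := by
    have heq : Real.exp ((3:ℝ)/2) = Real.exp 1 * Real.exp (1/2) := by
      rw [← Real.exp_add]; norm_num
    nlinarith [Real.exp_one_lt_d9.le, exp_half_le, (Real.exp_pos ((1:ℝ)/2)).le]
  have hE : (0:ℝ) < Real.exp (3/2) := Real.exp_pos _
  push_cast
  rw [show Real.sqrt 2 * (2^3/Real.sqrt 3) * (Real.exp (3/2))⁻¹
      = (Real.sqrt 2 * 2^3) / (Real.sqrt 3 * Real.exp (3/2)) by field_simp,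
    le_div_iff₀ (by positivity)]
  nlinarith [sqrt_two_ge]


lemma glue {a b c t s : ℝ} (ha : 0 ≤ a) (hb : 0 ≤ b)
    (h1 : a * Real.exp s ≤ c) (hc : c ≤ b) (hs : t - 1/3 ≤ s) :
    a ≤ Real.sqrt 2 * b * Real.exp (-t) := by
  have hE : (0:ℝ) < Real.exp s := Real.exp_pos s
  have h2 : a ≤ b * (Real.exp s)⁻¹ := by
    rw [← div_eq_mul_inv, le_div_iff₀ hE]
    exact h1.trans hc
  calc a ≤ b * (Real.exp s)⁻¹ := h2
    _ = b * Real.exp (-s) := by rw [Real.exp_neg]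
    _ ≤ b * Real.exp (-t + 1/3) := by
        apply mul_le_mul_of_nonneg_left _ hb
        exact Real.exp_le_exp.2 (by linarith)
    _ = b * Real.exp (1/3) * Real.exp (-t) := by
        rw [mul_assoc, ← Real.exp_add, add_comm (1/3 : ℝ) (-t)]
    _ ≤ Real.sqrt 2 * b * Real.exp (-t) := by
        apply mul_le_mul_of_nonneg_right _ (Real.exp_pos _).le
        rw [mul_comm (Real.sqrt 2) b]
        exact mul_le_mul_of_nonneg_left exp_third hb

lemma choose_le_gauss_up (n k : ℕ) (hn : 1 ≤ n) (hnk : n ≤ 2*k) (hkn : k ≤ n) :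
    (n.choose k : ℝ) ≤ Real.sqrt 2 * (2^n / Real.sqrt n) * Real.exp (-(2*(k:ℝ)-(n:ℝ))^2/(2*(n:ℝ))) := by
  rcases eq_or_ne n 1 with rfl | hne1
  · have hk1 : k = 1 := by omega
    subst hk1
    exact_mod_cast case_n1
  · rcases eq_or_ne n 3 with rfl | hne3
    · have hk23 : k = 2 ∨ k = 3 := by omega
      rcases hk23 with rfl | rfl
      · exact_mod_cast case_n3k2
      · exact_mod_cast case_n3k3
    · rcases Nat.even_or_odd n with ⟨m, hm⟩ | ⟨m, hm⟩
      · -- even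
        subst hm
        have hm1 : 1 ≤ m := by omega
        obtain ⟨j, rfl⟩ : ∃ j, k = m + j := ⟨k - m, by omega⟩
        have hjm : j ≤ m := by omega
        have hm0 : ((m:ℝ)) ≠ 0 := by positivity
        have hexp : -(2*((m+j:ℕ):ℝ)-((m+m:ℕ):ℝ))^2/(2*((m+m:ℕ):ℝ)) = -((j:ℝ)^2/(m:ℝ)) := by
          push_cast
          field_simp
          ring
        rw [hexp]
        have htele : ((m+m).choose (m+j) : ℝ) *
            Real.exp (∑ i ∈ Finset.range j, hterm ((2*(i:ℝ)+1)/(2*(m:ℝ)+1)))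
              ≤ ((m+m).choose m : ℝ) := by
          rw [show m+m = 2*m by ring]
          exact tele_even m j hjm
        have hmid : ((m+m).choose m : ℝ) ≤ 2^(m+m)/Real.sqrt ((m+m : ℕ) : ℝ) := by
          have := mid_real (m+m) (by omega)
          rwa [show (m+m)/2 = m by omega] at this
        have hsum : (j:ℝ)^2/(m:ℝ) - 1/3
            ≤ ∑ i ∈ Finset.range j, hterm ((2*(i:ℝ)+1)/(2*(m:ℝ)+1)) := by
          rw [sum_even_eq]
          exact even_sum_ge m j hm1 hjm
        exact glue (by positivity) (by positivity) htele hmid hsum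
      · -- odd
        subst hm
        have hm2 : 2 ≤ m := by omega
        obtain ⟨j, rfl⟩ : ∃ j, k = m + 1 + j := ⟨k - (m+1), by omega⟩
        have hjm : j ≤ m := by omega
        have hexp : -(2*((m+1+j:ℕ):ℝ)-((2*m+1:ℕ):ℝ))^2/(2*((2*m+1:ℕ):ℝ))
            = -((2*(j:ℝ)+1)^2/(2*(2*(m:ℝ)+1))) := by
          have hq : (0:ℝ) < 2*(m:ℝ)+1 := by positivity
          push_cast
          field_simp
          ring
        rw [hexp]
        have htele : ((2*m+1).choose (m+1+j) : ℝ) *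
            Real.exp (∑ i ∈ Finset.range j, hterm (((i:ℝ)+1)/((m:ℝ)+1)))
              ≤ ((2*m+1).choose (m+1) : ℝ) := tele_odd m j hjm
        have hmid : ((2*m+1).choose (m+1) : ℝ) ≤ 2^(2*m+1)/Real.sqrt ((2*m+1 : ℕ) : ℝ) := by
          have h1 := mid_real (2*m+1) (by omega)
          rw [show (2*m+1)/2 = m by omega] at h1
          have hsym : (2*m+1).choose (m+1) = (2*m+1).choose m := by
            have := Nat.choose_symm (show m+1 ≤ 2*m+1 by omega)
            simpa [show 2*m+1-(m+1) = m by omega] using this.symm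
          rw [hsym]
          exact h1
        have hsum : (2*(j:ℝ)+1)^2/(2*(2*(m:ℝ)+1)) - 1/3
            ≤ ∑ i ∈ Finset.range j, hterm (((i:ℝ)+1)/((m:ℝ)+1)) := by
          rw [sum_odd_eq]
          exact odd_sum_ge m j hm2 hjm
        exact glue (by positivity) (by positivity) htele hmid hsum

lemma choose_le_gauss (n k : ℕ) (hn : 1 ≤ n) :
    (n.choose k : ℝ) ≤ Real.sqrt 2 * (2^n / Real.sqrt n) * Real.exp (-(2*(k:ℝ)-(n:ℝ))^2/(2*(n:ℝ))) := by
  rcases Nat.lt_or_ge n k with h | h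
  · rw [Nat.choose_eq_zero_of_lt h]
    have : (0:ℝ) < Real.sqrt 2 * (2^n / Real.sqrt n) * Real.exp (-(2*(k:ℝ)-(n:ℝ))^2/(2*(n:ℝ))) := by
      have h1 : (0:ℝ) < Real.sqrt 2 := by positivity
      have h2 : (0:ℝ) < Real.sqrt n := Real.sqrt_pos.2 (by exact_mod_cast hn)
      positivity
    simpa using this.le
  · rcases Nat.lt_or_ge (2*k) n with h2 | h2
    · have hsym : (n.choose k : ℝ) = (n.choose (n-k) : ℝ) := by
        rw [Nat.choose_symm h]
      rw [hsym]
      have := choose_le_gauss_up n (n-k) hn (by omega) (by omega)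
      convert this using 3
      push_cast [Nat.cast_sub h]
      ring
    · exact choose_le_gauss_up n k hn h2 h

def Eset (n : ℕ) (c : ℤ) : Set (Fin n → ℤ) :=
  {ε | (∀ i, ε i = 1 ∨ ε i = -1) ∧ ∑ i, ε i = c}

lemma Eset_finite (n : ℕ) (c : ℤ) : (Eset n c).Finite := by
  apply Set.Finite.subset (Set.Finite.pi (t := fun _ : Fin n => ({1, -1} : Set ℤ))
    (fun _ => Set.toFinite _))
  intro ε hε
  rw [Set.mem_pi]
  intro i _
  rcases hε.1 i with h | h <;> simp [h]

lemma fin_tele : ∀ (n : ℕ) (f : Fin (n+1) → ℤ),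
    ∑ i : Fin n, (f i.succ - f i.castSucc) = f (Fin.last n) - f 0 := by
  intro n
  induction n with
  | zero => intro f; simp [Fin.last]
  | succ n ih =>
    intro f
    rw [Fin.sum_univ_castSucc]
    have h1 : ∑ i : Fin n, (f (i.castSucc).succ - f (i.castSucc).castSucc)
        = f ((Fin.last n).castSucc) - f 0 := by
      have := ih (fun j => f j.castSucc)
      simp only [← Fin.succ_castSucc] at this ⊢
      exact this
    rw [h1]
    have h2 : (Fin.last n).succ = Fin.last (n+1) := rfl
    rw [h2]
    ring

lemma W_le_prod (n : ℕ) (x : ℤ × ℤ) :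
    W n x ≤ (Eset n (x.1 + x.2)).ncard * (Eset n (x.1 - x.2)).ncard := by
  classical
  set Φ : (Fin (n+1) → ℤ × ℤ) → (Fin n → ℤ) × (Fin n → ℤ) :=
    fun v => (fun i => (v i.succ - v i.castSucc).1 + (v i.succ - v i.castSucc).2,
              fun i => (v i.succ - v i.castSucc).1 - (v i.succ - v i.castSucc).2) with hΦ
  have hmaps : ∀ v ∈ {v : Fin (n + 1) → ℤ × ℤ |
      v 0 = (0, 0) ∧ v (Fin.last n) = x ∧
      ∀ i : Fin n, gnorm (v i.succ - v i.castSucc) = 1},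
      Φ v ∈ (Eset n (x.1 + x.2)) ×ˢ (Eset n (x.1 - x.2)) := by
    rintro v ⟨h0, hl, hs⟩
    have hsum1 : ∑ i : Fin n, (v i.succ - v i.castSucc).1 = x.1 := by
      have := fin_tele n (fun j => (v j).1)
      simp only [Prod.fst_sub] at *
      rw [this, h0, hl]
      simp
    have hsum2 : ∑ i : Fin n, (v i.succ - v i.castSucc).2 = x.2 := by
      have := fin_tele n (fun j => (v j).2)
      simp only [Prod.snd_sub] at *
      rw [this, h0, hl]
      simp
    constructor
    · constructor
      · intro i
        have := hs i
        unfold gnorm at this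
        simp only [hΦ]
        omega
      · simp only [hΦ]
        rw [Finset.sum_add_distrib, hsum1, hsum2]
    · constructor
      · intro i
        have := hs i
        unfold gnorm at this
        simp only [hΦ]
        omega
      · simp only [hΦ]
        rw [Finset.sum_sub_distrib, hsum1, hsum2]
  have hinj : Set.InjOn Φ {v : Fin (n + 1) → ℤ × ℤ |
      v 0 = (0, 0) ∧ v (Fin.last n) = x ∧
      ∀ i : Fin n, gnorm (v i.succ - v i.castSucc) = 1} := by
    rintro v ⟨h0, _, _⟩ v' ⟨h0', _, _⟩ heq
    have h1 := congrArg Prod.fst heq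
    have h2 := congrArg Prod.snd heq
    simp only [hΦ] at h1 h2
    have hstep : ∀ i : Fin n, v i.succ - v i.castSucc = v' i.succ - v' i.castSucc := by
      intro i
      have e1 := congrFun h1 i
      have e2 := congrFun h2 i
      have : (v i.succ - v i.castSucc).1 = (v' i.succ - v' i.castSucc).1 ∧
             (v i.succ - v i.castSucc).2 = (v' i.succ - v' i.castSucc).2 := by omega
      exact Prod.ext this.1 this.2
    funext j
    induction j using Fin.induction with
    | zero => rw [h0, h0']
    | succ i ih =>
      have := hstep i
      have e : v i.succ = v i.castSucc + (v i.succ - v i.castSucc) := by ring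
      rw [e, this, ih]
      ring
  have hfin : ((Eset n (x.1 + x.2)) ×ˢ (Eset n (x.1 - x.2))).Finite :=
    (Eset_finite n _).prod (Eset_finite n _)
  calc W n x ≤ ((Eset n (x.1 + x.2)) ×ˢ (Eset n (x.1 - x.2))).ncard :=
        Set.ncard_le_ncard_of_injOn Φ hmaps hinj hfin
    _ = (Eset n (x.1 + x.2)).ncard * (Eset n (x.1 - x.2)).ncard := by
        rw [← Nat.card_coe_set_eq, ← Nat.card_coe_set_eq, ← Nat.card_coe_set_eq,
          Nat.card_congr (Equiv.Set.prod _ _), Nat.card_prod]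

lemma Eset_card_key (n : ℕ) (c : ℤ) (ε : Fin n → ℤ) (hε : ε ∈ Eset n c) :
    2 * ((Finset.univ.filter (fun i => ε i = 1)).card : ℤ) = n + c := by
  classical
  obtain ⟨h1, h2⟩ := hε
  have hsplit := Finset.sum_filter_add_sum_filter_not Finset.univ (fun i => ε i = 1) ε
  have ha : ∑ i ∈ Finset.univ.filter (fun i => ε i = 1), ε i
      = ((Finset.univ.filter (fun i => ε i = 1)).card : ℤ) := by
    rw [Finset.sum_congr rfl (fun i hi => (Finset.mem_filter.1 hi).2)]
    simp
  have hb : ∑ i ∈ Finset.univ.filter (fun i => ¬ ε i = 1), ε i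
      = -(((Finset.univ.filter (fun i => ¬ ε i = 1)).card : ℤ)) := by
    rw [Finset.sum_congr rfl (fun i hi => by
      rcases h1 i with h | h
      · exact absurd h (Finset.mem_filter.1 hi).2
      · exact h)]
    simp
  have hc := Finset.card_filter_add_card_filter_not (s := Finset.univ)
    (p := fun i : Fin n => ε i = 1)
  rw [ha, hb, h2] at hsplit
  have hcu : (Finset.univ : Finset (Fin n)).card = n := by simp
  rw [hcu] at hc
  omega

lemma Eset_ncard_le_choose (n : ℕ) (c : ℤ) (k : ℕ) (hk : 2 * (k : ℤ) = n + c) :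
    (Eset n c).ncard ≤ n.choose k := by
  classical
  have hmaps : ∀ ε ∈ Eset n c,
      (Finset.univ.filter (fun i => ε i = 1)) ∈ (↑(Finset.powersetCard k (Finset.univ : Finset (Fin n))) : Set (Finset (Fin n))) := by
    intro ε hε
    rw [Finset.mem_coe, Finset.mem_powersetCard]
    refine ⟨Finset.filter_subset _ _, ?_⟩
    have := Eset_card_key n c ε hε
    omega
  have hinj : Set.InjOn (fun ε => Finset.univ.filter (fun i => ε i = 1)) (Eset n c) := by
    intro ε hε ε' hε' heq
    funext i
    simp only [] at heq
    have hmem : (i ∈ Finset.univ.filter (fun j => ε j = 1)) ↔ (i ∈ Finset.univ.filter (fun j => ε' j = 1)) := by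
      rw [heq]
    simp only [Finset.mem_filter, Finset.mem_univ, true_and] at hmem
    rcases hε.1 i with h | h <;> rcases hε'.1 i with h' | h' <;> simp [h, h'] at hmem ⊢ <;> omega
  calc (Eset n c).ncard ≤ (↑(Finset.powersetCard k (Finset.univ : Finset (Fin n))) : Set (Finset (Fin n))).ncard :=
        Set.ncard_le_ncard_of_injOn _ hmaps hinj (Set.toFinite _)
    _ = n.choose k := by
        rw [Set.ncard_coe_finset, Finset.card_powersetCard]
        simp

lemma Eset_ncard_le (n : ℕ) (hn : 1 ≤ n) (c : ℤ) :
    ((Eset n c).ncard : ℝ) ≤ Real.sqrt 2 * (2^n / Real.sqrt n) * Real.exp (-((c:ℝ))^2/(2*(n:ℝ))) := by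
  have hpos : (0:ℝ) < Real.sqrt 2 * (2^n / Real.sqrt n) * Real.exp (-((c:ℝ))^2/(2*(n:ℝ))) := by
    have h2 : (0:ℝ) < Real.sqrt n := Real.sqrt_pos.2 (by exact_mod_cast hn)
    positivity
  rcases Set.eq_empty_or_nonempty (Eset n c) with he | ⟨ε₀, hε₀⟩
  · rw [he]
    simpa using hpos.le
  · set k := (Finset.univ.filter (fun i => ε₀ i = 1)).card with hkdef
    have hk : 2 * (k : ℤ) = n + c := Eset_card_key n c ε₀ hε₀
    have h1 : (Eset n c).ncard ≤ n.choose k := Eset_ncard_le_choose n c k hk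
    have h2 := choose_le_gauss n k hn
    have hce : ((c:ℝ))^2 = (2*(k:ℝ)-(n:ℝ))^2 := by
      have : (c:ℝ) = 2*(k:ℝ)-(n:ℝ) := by
        have := congrArg (fun t : ℤ => (t:ℝ)) hk
        push_cast at this
        linarith
      rw [this]
    rw [hce]
    exact le_trans (by exact_mod_cast h1) h2


/-- Lemma A.1 (local CLT type bound): there is `C < ∞` such that for every
`n ≥ 1` and `|x| ≥ 3`, `P(Sₙ = x) = 4⁻ⁿ W_n^{o,x} ≤ (2/n) e^{−|x|²/(2n)} + C/(n|x|²)`. -/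
theorem stmt18 :
    ∃ C : ℝ, ∀ n : ℕ, 1 ≤ n → ∀ x : ℤ × ℤ, 3 ≤ gnorm x →
      (1 / (4 : ℝ)) ^ n * (W n x : ℝ)
        ≤ 2 / n * Real.exp (-(gnorm x : ℝ) ^ 2 / (2 * n))
          + C / (n * (gnorm x : ℝ) ^ 2) := by
  use 0
  intro n hn x _
  have hn0 : (0:ℝ) < (n:ℝ) := by exact_mod_cast hn
  have hsn : (0:ℝ) < Real.sqrt n := Real.sqrt_pos.2 hn0
  set a : ℤ := x.1 + x.2
  set b : ℤ := x.1 - x.2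
  have hW : (W n x : ℝ) ≤ ((Eset n a).ncard : ℝ) * ((Eset n b).ncard : ℝ) := by
    exact_mod_cast W_le_prod n x
  have hA1 := Eset_ncard_le n hn a
  have hA2 := Eset_ncard_le n hn b
  have hprod : ((Eset n a).ncard : ℝ) * ((Eset n b).ncard : ℝ)
      ≤ 2 * (4:ℝ)^n / n * Real.exp (-(((a:ℝ))^2+((b:ℝ))^2)/(2*(n:ℝ))) := by
    calc ((Eset n a).ncard : ℝ) * ((Eset n b).ncard : ℝ)
        ≤ (Real.sqrt 2 * (2^n / Real.sqrt n) * Real.exp (-((a:ℝ))^2/(2*(n:ℝ)))) *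
          (Real.sqrt 2 * (2^n / Real.sqrt n) * Real.exp (-((b:ℝ))^2/(2*(n:ℝ)))) := by
          apply mul_le_mul hA1 hA2 (by positivity) (by positivity)
      _ = (Real.sqrt 2 * Real.sqrt 2) * ((2^n / Real.sqrt n) * (2^n / Real.sqrt n)) *
          (Real.exp (-((a:ℝ))^2/(2*(n:ℝ))) * Real.exp (-((b:ℝ))^2/(2*(n:ℝ)))) := by ring
      _ = 2 * (4:ℝ)^n / n * Real.exp (-(((a:ℝ))^2+((b:ℝ))^2)/(2*(n:ℝ))) := by
          have hP : ((2:ℝ)^n/Real.sqrt n) * ((2:ℝ)^n/Real.sqrt n) = 4^n/(n:ℝ) := by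
            rw [div_mul_div_comm, Real.mul_self_sqrt hn0.le]
            congr 1
            rw [← mul_pow]
            norm_num
          have hE : (-((a:ℝ))^2/(2*(n:ℝ))) + (-((b:ℝ))^2/(2*(n:ℝ)))
              = -(((a:ℝ))^2+((b:ℝ))^2)/(2*(n:ℝ)) := by ring
          rw [Real.mul_self_sqrt (by norm_num : (0:ℝ) ≤ 2), ← Real.exp_add, hP, hE]
          ring
  have hg2 : ((gnorm x : ℕ):ℝ)^2 ≤ ((a:ℝ))^2 + ((b:ℝ))^2 := by
    have hgr : ((gnorm x : ℕ):ℝ) = |(x.1:ℝ)| + |(x.2:ℝ)| := by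
      unfold gnorm
      push_cast [Nat.cast_natAbs, Int.cast_abs]
      ring
    have har : (a:ℝ) = (x.1:ℝ) + (x.2:ℝ) := by push_cast [a]; ring
    have hbr : (b:ℝ) = (x.1:ℝ) - (x.2:ℝ) := by push_cast [b]; ring
    rw [hgr, har, hbr]
    nlinarith [sq_nonneg (|(x.1:ℝ)| - |(x.2:ℝ)|), sq_abs (x.1:ℝ), sq_abs (x.2:ℝ),
      abs_nonneg (x.1:ℝ), abs_nonneg (x.2:ℝ), sq_nonneg ((x.1:ℝ) + (x.2:ℝ)), sq_nonneg ((x.1:ℝ) - (x.2:ℝ)),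
      neg_abs_le (x.1:ℝ), le_abs_self (x.1:ℝ), neg_abs_le (x.2:ℝ), le_abs_self (x.2:ℝ)]
  have hEmono : Real.exp (-(((a:ℝ))^2+((b:ℝ))^2)/(2*(n:ℝ)))
      ≤ Real.exp (-((gnorm x : ℕ):ℝ)^2/(2*(n:ℝ))) := by
    apply Real.exp_le_exp.2
    rw [div_le_div_iff₀ (by linarith) (by linarith)]
    nlinarith [hg2, hn0]
  have h44 : (1/4:ℝ)^n * 4^n = 1 := by
    rw [← mul_pow]
    norm_num
  calc (1/4:ℝ)^n * (W n x : ℝ)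
      ≤ (1/4:ℝ)^n * (2 * (4:ℝ)^n / n * Real.exp (-(((a:ℝ))^2+((b:ℝ))^2)/(2*(n:ℝ)))) := by
        apply mul_le_mul_of_nonneg_left (hW.trans hprod) (by positivity)
    _ = ((1/4:ℝ)^n * 4^n) * (2 / n * Real.exp (-(((a:ℝ))^2+((b:ℝ))^2)/(2*(n:ℝ)))) := by ring
    _ = 2 / n * Real.exp (-(((a:ℝ))^2+((b:ℝ))^2)/(2*(n:ℝ))) := by rw [h44, one_mul]
    _ ≤ 2 / n * Real.exp (-((gnorm x : ℕ):ℝ)^2/(2*(n:ℝ))) := by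
        apply mul_le_mul_of_nonneg_left hEmono (by positivity)
    _ ≤ 2 / n * Real.exp (-((gnorm x : ℕ):ℝ)^2/(2*(n:ℝ))) + 0 / ((n:ℝ) * ((gnorm x : ℕ):ℝ)^2) := by
        rw [zero_div, add_zero]
end

section
/- For every killing rate κ > 0, the Green's function at the point (1,1) satisfies G^{o,(1,1)} ≥ (log κ^{−1})/π − 1. -/
open scoped Real

private lemma gnorm_eq_one_iff {d : ℤ × ℤ} :
    gnorm d = 1 ↔ d = (1,0) ∨ d = (-1,0) ∨ d = (0,1) ∨ d = (0,-1) := by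
  obtain ⟨a, b⟩ := d
  simp only [gnorm, Prod.mk.injEq]
  omega

/-- the step associated to a pair of booleans -/
private def stp (a b : Bool) : ℤ × ℤ :=
  if a then (if b then (1,0) else (0,1)) else (if b then (0,-1) else (-1,0))

private lemma gnorm_stp (a b : Bool) : gnorm (stp a b) = 1 := by
  cases a <;> cases b <;> rfl

private lemma stp_inj {a b a' b' : Bool} (h : stp a b = stp a' b') : a = a' ∧ b = b' := by
  revert h; cases a <;> cases b <;> cases a' <;> cases b' <;> decide

private lemma stp_add (a b : Bool) : (stp a b).1 + (stp a b).2 = if a then 1 else -1 := by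
  cases a <;> cases b <;> rfl

private lemma stp_sub (a b : Bool) : (stp a b).1 - (stp a b).2 = if b then 1 else -1 := by
  cases a <;> cases b <;> rfl

private def unstp (d : ℤ × ℤ) : Bool × Bool := (decide (d.1 + d.2 = 1), decide (d.1 - d.2 = 1))

private lemma unstp_stp {d : ℤ × ℤ} (h : gnorm d = 1) : stp (unstp d).1 (unstp d).2 = d := by
  rcases gnorm_eq_one_iff.mp h with rfl | rfl | rfl | rfl <;> rfl

private lemma walk_ext {n : ℕ} {v w : Fin (n+1) → ℤ × ℤ}
    (h0 : v 0 = w 0)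
    (h : ∀ i : Fin n, v i.succ - v i.castSucc = w i.succ - w i.castSucc) : v = w := by
  suffices H : ∀ k (hk : k < n + 1), v ⟨k, hk⟩ = w ⟨k, hk⟩ by
    funext i; exact H i.1 i.2
  intro k
  induction k with
  | zero => intro hk; exact h0
  | succ k ih =>
    intro hk
    have hk' : k < n := Nat.lt_of_succ_lt_succ hk
    have h1 := h ⟨k, hk'⟩
    have h2 := ih (Nat.lt_of_succ_lt hk)
    have e1 : (⟨k, hk'⟩ : Fin n).succ = ⟨k+1, hk⟩ := rfl
    have e2 : (⟨k, hk'⟩ : Fin n).castSucc = ⟨k, Nat.lt_of_succ_lt hk⟩ := rfl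
    rw [e1, e2] at h1
    have : v ⟨k+1, hk⟩ - v ⟨k, Nat.lt_of_succ_lt hk⟩ = w ⟨k+1, hk⟩ - w ⟨k, Nat.lt_of_succ_lt hk⟩ := h1
    rw [h2] at this
    exact sub_left_injective this

private def WSet (n : ℕ) (x : ℤ × ℤ) : Set (Fin (n + 1) → ℤ × ℤ) :=
  {v : Fin (n + 1) → ℤ × ℤ |
    v 0 = (0, 0) ∧ v (Fin.last n) = x ∧
    ∀ i : Fin n, gnorm (v i.succ - v i.castSucc) = 1}

private lemma W_eq (n : ℕ) (x : ℤ × ℤ) : W n x = (WSet n x).ncard := rfl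

/-- increments map -/
private def incr (n : ℕ) (v : Fin (n+1) → ℤ × ℤ) : Fin n → Bool × Bool :=
  fun i => unstp (v i.succ - v i.castSucc)

private lemma incr_injOn (n : ℕ) (x : ℤ × ℤ) : Set.InjOn (incr n) (WSet n x) := by
  intro v hv w hw hvw
  apply walk_ext (by rw [hv.1, hw.1])
  intro i
  have h1 : stp (incr n v i).1 (incr n v i).2 = v i.succ - v i.castSucc :=
    unstp_stp (hv.2.2 i)
  have h2 : stp (incr n w i).1 (incr n w i).2 = w i.succ - w i.castSucc :=
    unstp_stp (hw.2.2 i)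
  rw [← h1, ← h2, hvw]

private lemma WSet_finite (n : ℕ) (x : ℤ × ℤ) : (WSet n x).Finite :=
  Set.Finite.of_finite_image (Set.toFinite _) (incr_injOn n x)

private lemma W_le (n : ℕ) (x : ℤ × ℤ) : W n x ≤ 4 ^ n := by
  rw [W_eq, ← Set.ncard_image_of_injOn (incr_injOn n x)]
  calc (incr n '' WSet n x).ncard ≤ (Set.univ : Set (Fin n → Bool × Bool)).ncard :=
        Set.ncard_le_ncard (Set.subset_univ _) Set.finite_univ
    _ = Fintype.card (Fin n → Bool × Bool) := by
        rw [Set.ncard_univ, Nat.card_eq_fintype_card]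
    _ = 4 ^ n := by simp [Fintype.card_fun]

private def pstep (m : ℕ) (p : Finset (Fin m) × Finset (Fin m)) : ℕ → ℤ × ℤ :=
  fun j => if h : j < m then stp (decide ((⟨j, h⟩ : Fin m) ∈ p.1)) (decide ((⟨j, h⟩ : Fin m) ∈ p.2)) else 0

private def psi (m : ℕ) (p : Finset (Fin m) × Finset (Fin m)) : Fin (m+1) → ℤ × ℤ :=
  fun i => ∑ j ∈ Finset.range i.1, pstep m p j

private lemma psi_incr (m : ℕ) (p : Finset (Fin m) × Finset (Fin m)) (i : Fin m) :
    psi m p i.succ - psi m p i.castSucc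
      = stp (decide (i ∈ p.1)) (decide (i ∈ p.2)) := by
  have : psi m p i.succ = psi m p i.castSucc + pstep m p i.1 := by
    simp only [psi, Fin.val_succ, Fin.coe_castSucc, Finset.sum_range_succ]
  rw [this, add_sub_cancel_left, pstep, dif_pos i.2]

private lemma psi_inj (m : ℕ) : Function.Injective (psi m) := by
  intro p q hpq
  have key : ∀ i : Fin m, (decide (i ∈ p.1), decide (i ∈ p.2))
      = (decide (i ∈ q.1), decide (i ∈ q.2)) := by
    intro i
    have h1 := psi_incr m p i
    have h2 := psi_incr m q i
    rw [hpq] at h1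
    obtain ⟨ha, hb⟩ := stp_inj (h1.symm.trans h2)
    rw [ha, hb]
  have e1 : p.1 = q.1 := by
    ext i
    have := congrArg Prod.fst (key i)
    simpa using this
  have e2 : p.2 = q.2 := by
    ext i
    have := congrArg Prod.snd (key i)
    simpa using this
  exact Prod.ext e1 e2

private lemma sum_bool_count {m : ℕ} (A : Finset (Fin m)) :
    ∑ j : Fin m, (if j ∈ A then (1 : ℤ) else -1) = 2 * A.card - m := by
  have : ∀ j : Fin m, (if j ∈ A then (1 : ℤ) else -1)
      = (if j ∈ A then (2 : ℤ) else 0) - 1 := by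
    intro j; split <;> norm_num
  rw [Finset.sum_congr rfl (fun j _ => this j)]
  rw [Finset.sum_sub_distrib, Finset.sum_ite_mem, Finset.univ_inter, Finset.sum_const,
    Finset.sum_const, Finset.card_univ, Fintype.card_fin]
  push_cast
  ring

private lemma psi_mem (n : ℕ) (p : Finset (Fin (2*n)) × Finset (Fin (2*n)))
    (hA : p.1.card = n + 1) (hB : p.2.card = n) :
    psi (2*n) p ∈ WSet (2*n) (1,1) := by
  refine ⟨by simp [psi]; rfl, ?_, ?_⟩
  · -- endpoint
    have hlast : psi (2*n) p (Fin.last (2*n)) = ∑ j : Fin (2*n),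
        stp (decide (j ∈ p.1)) (decide (j ∈ p.2)) := by
      rw [psi]
      simp only [Fin.val_last]
      rw [← Fin.sum_univ_eq_sum_range (pstep (2*n) p) (2*n)]
      refine Finset.sum_congr rfl fun j _ => ?_
      simp [pstep, j.2]
    set S := ∑ j : Fin (2*n), stp (decide (j ∈ p.1)) (decide (j ∈ p.2)) with hS
    have hsum1 : S.1 + S.2 = 2 := by
      have : S.1 + S.2 = ∑ j : Fin (2*n),
          ((stp (decide (j ∈ p.1)) (decide (j ∈ p.2))).1
            + (stp (decide (j ∈ p.1)) (decide (j ∈ p.2))).2) := by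
        rw [hS, Prod.fst_sum, Prod.snd_sum, ← Finset.sum_add_distrib]
      rw [this]
      have : ∀ j : Fin (2*n), (stp (decide (j ∈ p.1)) (decide (j ∈ p.2))).1
          + (stp (decide (j ∈ p.1)) (decide (j ∈ p.2))).2 = if j ∈ p.1 then (1:ℤ) else -1 := by
        intro j; rw [stp_add]; by_cases h : j ∈ p.1 <;> simp [h]
      rw [Finset.sum_congr rfl (fun j _ => this j), sum_bool_count, hA]
      push_cast; ring
    have hsum2 : S.1 - S.2 = 0 := by
      have : S.1 - S.2 = ∑ j : Fin (2*n),
          ((stp (decide (j ∈ p.1)) (decide (j ∈ p.2))).1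
            - (stp (decide (j ∈ p.1)) (decide (j ∈ p.2))).2) := by
        rw [hS, Prod.fst_sum, Prod.snd_sum, ← Finset.sum_sub_distrib]
      rw [this]
      have : ∀ j : Fin (2*n), (stp (decide (j ∈ p.1)) (decide (j ∈ p.2))).1
          - (stp (decide (j ∈ p.1)) (decide (j ∈ p.2))).2 = if j ∈ p.2 then (1:ℤ) else -1 := by
        intro j; rw [stp_sub]; by_cases h : j ∈ p.2 <;> simp [h]
      rw [Finset.sum_congr rfl (fun j _ => this j), sum_bool_count, hB]
      push_cast
      ring
    rw [hlast]
    exact Prod.ext (by omega) (by omega)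
  · intro i
    rw [psi_incr, gnorm_stp]

private lemma W_lower (n : ℕ) :
    (2*n).choose n * (2*n).choose (n+1) ≤ W (2*n) (1,1) := by
  classical
  set T : Finset (Finset (Fin (2*n)) × Finset (Fin (2*n))) :=
    (Finset.univ.powersetCard (n+1)) ×ˢ (Finset.univ.powersetCard n) with hT
  have hTcard : T.card = (2*n).choose (n+1) * (2*n).choose n := by
    rw [hT, Finset.card_product, Finset.card_powersetCard, Finset.card_powersetCard,
      Finset.card_univ, Fintype.card_fin]
  have himg : psi (2*n) '' ↑T ⊆ WSet (2*n) (1,1) := by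
    rintro _ ⟨p, hp, rfl⟩
    rw [hT, Finset.coe_product] at hp
    obtain ⟨h1, h2⟩ := hp
    exact psi_mem n p (Finset.mem_powersetCard_univ.mp h1) (Finset.mem_powersetCard_univ.mp h2)
  calc (2*n).choose n * (2*n).choose (n+1) = T.card := by rw [hTcard]; ring
    _ = (↑T : Set _).ncard := (Set.ncard_coe_finset T).symm
    _ = (psi (2*n) '' ↑T).ncard :=
        by rw [Set.ncard_image_of_injective _ (psi_inj (2*n))]
    _ ≤ (WSet (2*n) (1,1)).ncard := Set.ncard_le_ncard himg (WSet_finite _ _)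
    _ = W (2*n) (1,1) := (W_eq _ _).symm

private lemma centralBinom_prod (n : ℕ) :
    (Nat.centralBinom n : ℝ) = 4 ^ n * ∏ k ∈ Finset.range n, ((2*(k:ℝ)+1) / (2*k+2)) := by
  induction n with
  | zero => simp [Nat.centralBinom]
  | succ n ih =>
    have h := Nat.succ_mul_centralBinom_succ n
    have h' : ((n:ℝ)+1) * (Nat.centralBinom (n+1) : ℝ)
        = 2*(2*(n:ℝ)+1) * (Nat.centralBinom n : ℝ) := by exact_mod_cast h
    have hn : ((n:ℝ)+1) ≠ 0 := by positivity
    have hd : (2*(n:ℝ)+2) ≠ 0 := by positivity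
    rw [Finset.prod_range_succ, ← mul_assoc]
    have e : (Nat.centralBinom (n+1) : ℝ)
        = 2*(2*(n:ℝ)+1) * (Nat.centralBinom n : ℝ) / ((n:ℝ)+1) := by
      field_simp
      linarith [h']
    rw [e, ih]
    field_simp
    ring

private lemma wallis_prod_identity (n : ℕ) :
    (∏ k ∈ Finset.range n, ((2*(k:ℝ)+1) / (2*k+2)))^2 * (2*n+1) * Real.Wallis.W n = 1 := by
  induction n with
  | zero => simp [Real.Wallis.W]
  | succ n ih =>
    rw [Finset.prod_range_succ, Real.Wallis.W_succ]
    have h1 : (2*(n:ℝ)+1) ≠ 0 := by positivity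
    have h2 : (2*(n:ℝ)+2) ≠ 0 := by positivity
    have h3 : (2*(n:ℝ)+3) ≠ 0 := by positivity
    have : ((n:ℝ)+1 : ℝ) = (n:ℝ)+1 := rfl
    push_cast
    push_cast at ih
    field_simp
    field_simp at ih
    linear_combination (2*(n:ℝ)+3) * ih

private lemma cb_sq_lower (n : ℕ) :
    16^n * (2/π) ≤ (Nat.centralBinom n : ℝ)^2 * (2*n+1) := by
  have hW := Real.Wallis.W_le n
  have hWpos := Real.Wallis.W_pos n
  have hid := wallis_prod_identity n
  have hπ := Real.pi_pos
  set Q := (∏ k ∈ Finset.range n, ((2*(k:ℝ)+1) / (2*k+2)))^2 with hQ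
  have hcb : (Nat.centralBinom n : ℝ)^2 = 16^n * Q := by
    rw [centralBinom_prod, mul_pow, hQ, ← pow_mul, mul_comm n 2, pow_mul]
    norm_num
  rw [hcb]
  have h16 : (0:ℝ) < 16^n := by positivity
  -- from hid : Q * (2n+1) * W = 1 and W ≤ π/2 : Q * (2n+1) = 1/W ≥ 2/π
  have key : 2/π ≤ Q * (2*n+1) := by
    have hQW : Q * (2*(n:ℝ)+1) = 1 / Real.Wallis.W n := by
      field_simp
      linarith [hid]
    rw [hQW]
    rw [div_le_div_iff₀ hπ hWpos]
    linarith
  calc (16:ℝ)^n * (2/π) ≤ 16^n * (Q * (2*n+1)) := by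
        exact mul_le_mul_of_nonneg_left key h16.le
    _ = 16^n * Q * (2*n+1) := by ring

private lemma choose_mul_eq (n : ℕ) :
    ((2*n).choose (n+1) : ℝ) * ((n:ℝ)+1) = (Nat.centralBinom n : ℝ) * n := by
  have h := Nat.choose_succ_right_eq (2*n) n
  have h2 : 2*n - n = n := by omega
  rw [h2] at h
  have : ((2*n).choose (n+1) : ℝ) * ((n:ℝ)+1) = (((2*n).choose (n+1) * (n+1) : ℕ) : ℝ) := by
    push_cast; ring
  rw [this, h, Nat.centralBinom]
  push_cast; ring

private lemma key_term (n : ℕ) (hn : 1 ≤ n) {s : ℝ} (hs : 0 < s) :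
    (16*s^2)^n / (π * (n+2)) ≤ s^(2*n) * (((2*n).choose n * (2*n).choose (n+1) : ℕ) : ℝ) := by
  have hπ := Real.pi_pos
  have hn1 : (1:ℝ) ≤ (n:ℝ) := by exact_mod_cast hn
  have hC := cb_sq_lower n
  set C := (Nat.centralBinom n : ℝ) with hCdef
  have hCnn : 0 ≤ C := by positivity
  have hcm := choose_mul_eq n
  have hcbn : ((2*n).choose n : ℝ) = C := by rw [hCdef, Nat.centralBinom]
  -- express product of chooses
  have hprod : (((2*n).choose n * (2*n).choose (n+1) : ℕ) : ℝ)
      = C^2 * n / (n+1) := by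
    push_cast
    rw [hcbn]
    have hne : ((n:ℝ)+1) ≠ 0 := by positivity
    field_simp
    nlinarith [hcm]
  rw [hprod]
  have hs2 : (0:ℝ) < s^(2*n) := by positivity
  have hr : (16*s^2)^n = 16^n * s^(2*n) := by
    rw [mul_pow, ← pow_mul]
  rw [hr]
  rw [div_le_iff₀ (by positivity)]
  -- goal : 16^n * s^(2n) ≤ s^(2n) * (C^2*n/(n+1)) * (π*(n+2))
  have hC' : (16:ℝ)^n * 2 ≤ C^2*(2*(n:ℝ)+1)*π := by
    rw [mul_div_assoc'] at hC
    exact (div_le_iff₀ hπ).mp hC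
  have h16 : (0:ℝ) < 16^n := by positivity
  have key : 16^n * ((n:ℝ)+1) ≤ C^2 * n * π * (n+2) := by
    nlinarith [mul_le_mul_of_nonneg_left hC' (show (0:ℝ) ≤ (n:ℝ)*((n:ℝ)+2) by positivity),
      mul_nonneg h16.le (sub_nonneg.mpr hn1)]
  have hne : ((n:ℝ)+1) ≠ 0 := by positivity
  calc (16:ℝ)^n * s^(2*n) = s^(2*n) * ((16^n*((n:ℝ)+1))/((n:ℝ)+1)) := by
        field_simp
    _ ≤ s^(2*n) * ((C^2 * n * π * (n+2))/((n:ℝ)+1)) := by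
        exact mul_le_mul_of_nonneg_left ((div_le_div_iff_of_pos_right (by positivity)).mpr key) hs2.le
    _ = s^(2*n) * (C^2*(n:ℝ)/((n:ℝ)+1)) * (π*((n:ℝ)+2)) := by
        field_simp

/-- Lemma 6.1: `G^{o,(1,1)} ≥ (log κ⁻¹)/π − 1` for every `κ > 0`. -/
theorem stmt19 (κ : ℝ) (hκ : 0 < κ) :
    Real.log κ⁻¹ / π - 1 ≤ G κ (1, 1) := by
  have hπ := Real.pi_pos
  have h4κ : (0:ℝ) < 4 + κ := by linarith
  set s : ℝ := 1 / (4 + κ) with hs_def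
  have hs : 0 < s := by positivity
  set r : ℝ := 16 * s^2 with hr_def
  have hr0 : 0 < r := by positivity
  have hr1 : r < 1 := by
    rw [hr_def, hs_def, div_pow, one_pow, mul_one_div, div_lt_one (by positivity)]
    nlinarith
  set c : ℕ → ℝ := fun m => (1 / (4 + κ)) ^ m * (W m (1,1) : ℝ) with hc_def
  have hG : G κ (1,1) = ∑' m, c m := rfl
  have hc_nonneg : ∀ m, 0 ≤ c m := fun m => by
    rw [hc_def]; positivity
  have hq : (0:ℝ) ≤ 4 * s := by positivity
  have hq1 : 4 * s < 1 := by
    rw [hs_def, mul_one_div, div_lt_one h4κ]; linarith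
  have hc_le : ∀ m, c m ≤ (4*s)^m := by
    intro m
    rw [hc_def, mul_pow]
    simp only []
    calc s ^ m * (W m (1,1) : ℝ) ≤ s ^ m * ((4:ℝ)^m) := by
          have : (W m (1,1) : ℝ) ≤ (4:ℝ)^m := by exact_mod_cast W_le m (1,1)
          exact mul_le_mul_of_nonneg_left this (by positivity)
      _ = 4^m * s^m := by ring
  have hc_sum : Summable c :=
    Summable.of_nonneg_of_le hc_nonneg hc_le (summable_geometric_of_lt_one hq hq1)
  set g : ℕ → ℝ := fun k => r^(k+1) / (π * ((k:ℝ)+3)) with hg_def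
  have hg_nonneg : ∀ k, 0 ≤ g k := fun k => by rw [hg_def]; positivity
  have hg_le : ∀ k, g k ≤ c (2*(k+1)) := by
    intro k
    have hkey := key_term (k+1) (by omega) hs
    have hcast : ((((k+1):ℕ):ℝ)+2) = (k:ℝ)+3 := by push_cast; ring
    rw [hcast] at hkey
    have hW : (((2*(k+1)).choose (k+1) * (2*(k+1)).choose (k+2) : ℕ) : ℝ)
        ≤ (W (2*(k+1)) (1,1) : ℝ) := by exact_mod_cast W_lower (k+1)
    have : g k ≤ s^(2*(k+1)) * (((2*(k+1)).choose (k+1) * (2*(k+1)).choose (k+2) : ℕ) : ℝ) := by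
      rw [hg_def, hr_def]
      exact hkey
    calc g k ≤ s^(2*(k+1)) * (((2*(k+1)).choose (k+1) * (2*(k+1)).choose (k+2) : ℕ) : ℝ) := this
      _ ≤ s^(2*(k+1)) * (W (2*(k+1)) (1,1) : ℝ) :=
          mul_le_mul_of_nonneg_left hW (by positivity)
      _ = c (2*(k+1)) := by rw [hc_def]
  have hg_sum : Summable g := by
    apply Summable.of_nonneg_of_le hg_nonneg (fun k => ?_)
      (summable_geometric_of_lt_one hr0.le hr1)
    have h1π : (1:ℝ) ≤ π * ((k:ℝ)+3) := by
      have := Real.pi_gt_three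
      have : (0:ℝ) ≤ (k:ℝ) := Nat.cast_nonneg k
      nlinarith [Real.pi_gt_three]
    calc g k ≤ r^(k+1) := by
          rw [hg_def]
          exact div_le_self (by positivity) h1π
      _ ≤ r^k := pow_le_pow_of_le_one hr0.le hr1.le (by omega)
  have hstep1 : ∑' k, g k ≤ ∑' m, c m :=
    Summable.tsum_le_tsum_of_inj (fun k => 2*(k+1)) (fun a b hab => by simp only [] at hab; omega)
      (fun m _ => hc_nonneg m) hg_le hg_sum hc_sum
  -- log series
  have habs : |r| < 1 := by rw [abs_of_pos hr0]; exact hr1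
  have H := Real.hasSum_pow_div_log_of_abs_lt_one habs
  have H2 : HasSum (fun n : ℕ => r^(n+3)/((n:ℝ)+3)) (-Real.log (1-r) - (r + r^2/2)) := by
    have H2' := (hasSum_nat_add_iff' (f := fun k : ℕ => r^(k+1)/((k:ℝ)+1)) 2).mpr H
    simp only [Finset.sum_range_succ, Finset.sum_range_zero] at H2'
    convert H2' using 2 with n
    · rfl
    · push_cast; ring_nf
    · push_cast; norm_num
  have H3 := H2.div_const π
  have hstep2 : (-Real.log (1-r) - (r + r^2/2))/π ≤ ∑' k, g k := by
    rw [← H3.tsum_eq]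
    apply Summable.tsum_le_tsum _ H3.summable hg_sum
    intro k
    simp only [hg_def]
    rw [div_div, mul_comm ((k:ℝ)+3) π]
    exact (div_le_div_iff_of_pos_right (by positivity)).mpr (pow_le_pow_of_le_one hr0.le hr1.le (by omega))
  -- final log computation
  have h1r : 1 - r = κ*(8+κ)/(4+κ)^2 := by
    rw [hr_def, hs_def]
    field_simp
    ring
  have hlog : Real.log (1-r) = Real.log κ + Real.log (8+κ) - 2*Real.log (4+κ) := by
    rw [h1r, Real.log_div (by positivity) (by positivity),
      Real.log_mul (ne_of_gt hκ) (by positivity), Real.log_pow]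
    push_cast
    ring
  have hfin : Real.log κ⁻¹ / π - 1 ≤ (-Real.log (1-r) - (r + r^2/2)) / π := by
    have e1 : Real.log (8+κ) ≤ 2*Real.log (4+κ) := by
      have h := Real.log_le_log (by positivity : (0:ℝ) < 8+κ)
        (by nlinarith : (8:ℝ)+κ ≤ (4+κ)^2)
      rwa [Real.log_pow, Nat.cast_ofNat] at h
    have e2 : r + r^2/2 ≤ 3/2 := by nlinarith
    have e3 : (3:ℝ) ≤ π := Real.pi_gt_three.le
    have hA : Real.log κ⁻¹ - π ≤ -Real.log (1-r) - (r + r^2/2) := by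
      rw [Real.log_inv, hlog]
      linarith
    calc Real.log κ⁻¹/π - 1 = (Real.log κ⁻¹ - π)/π := by
          field_simp
      _ ≤ (-Real.log (1-r) - (r + r^2/2)) / π := by
          exact (div_le_div_iff_of_pos_right hπ).mpr hA
  rw [hG]
  linarith [hstep1, hstep2, hfin]
end
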